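/- Let (t_k) and (b_k) be strictly increasing real sequences with b_k > 0 and t_k → ∞, b_k → ∞, and assume Σ_k (t_{k+1} − t_k)/b_{k+1} = ∞. Let v : [0,∞) → ℝ be the piecewise linear function with v(0) = t_1 and v'(r) = b_k whenever t_k < v(r) < t_{k+1}, and set u(x) = v(|x|) on ℝⁿ. Then u is convex and super-coercive, and for almost every x with b_{k−1} < |x| < b_k (k ≥ 2), ∇u*(x)·x − u*(x) = t_k, while for almost every x with |x| < b_1, ∇u*(x)·x − u*(x) = t_1. -/

import Mathlib

open MeasureTheory Filter

lemma affine_of_deriv' {f : ℝ → ℝ} {c a b : ℝ} (hab : a ≤ b)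
    (hc : ContinuousOn f (Set.Icc a b)) (hd : ∀ x ∈ Set.Ico a b, HasDerivAt f c x) :
    f b = f a + c * (b - a) := by
  have hg : ∀ x ∈ Set.Ico a b, HasDerivWithinAt (fun y => f y - c * y) 0 (Set.Ici x) x := by
    intro x hx
    have h1 : HasDerivAt (fun y => f y - c * y) (c - c * 1) x :=
      (hd x hx).sub (((hasDerivAt_id x).const_mul c))
    simpa using h1.hasDerivWithinAt
  have hcont : ContinuousOn (fun y => f y - c * y) (Set.Icc a b) :=
    hc.sub ((continuous_const.mul continuous_id).continuousOn)
  have := constant_of_has_deriv_right_zero hcont hg b (Set.right_mem_Icc.2 hab)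
  linarith

/-- The (finite, real-valued) Legendre transform of a real-valued function on `ℝⁿ`. -/
noncomputable def conjR {n : ℕ} (u : EuclideanSpace ℝ (Fin n) → ℝ)
    (x : EuclideanSpace ℝ (Fin n)) : ℝ :=
  ⨆ y, ((inner ℝ x y : ℝ) - u y)

/-- Let `(t_k)`, `(b_k)` be strictly increasing with `b_k > 0`,
`t_k, b_k → ∞` and `Σ (t_{k+1} − t_k)/b_{k+1} = ∞`. Let `v` be the piecewise
linear function with `v(0) = t_1` and `v' = b_k` where `t_k < v < t_{k+1}`, and
`u(x) = v(|x|)`. Then `u` is convex and super-coercive, and a.e. on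
`{b_{k-1} < |x| < b_k}` one has `∇u*(x)·x − u*(x) = t_k`, while a.e. on
`{|x| < b_1}` one has `∇u*(x)·x − u*(x) = t_1`. (Sequences are 0-indexed here:
`t 0` plays the role of `t_1`.) -/
theorem stmt13 (n : ℕ) (hn : 1 ≤ n) (t b : ℕ → ℝ)
    (htm : StrictMono t) (hbm : StrictMono b) (hbpos : ∀ k, 0 < b k)
    (htl : Tendsto t atTop atTop) (hbl : Tendsto b atTop atTop)
    (hsum : ∑' k, ENNReal.ofReal ((t (k + 1) - t k) / b (k + 1)) = ⊤)
    (v : ℝ → ℝ) (hv0 : v 0 = t 0) (hvc : ContinuousOn v (Set.Ici 0))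
    (hvm : StrictMonoOn v (Set.Ici 0))
    (hvd : ∀ r : ℝ, 0 < r → ∀ k : ℕ, t k < v r → v r < t (k + 1) → HasDerivAt v (b k) r)
    (u : EuclideanSpace ℝ (Fin n) → ℝ) (hu : ∀ x, u x = v ‖x‖) :
    ConvexOn ℝ Set.univ u ∧
    Tendsto (fun x => u x / ‖x‖) (cocompact (EuclideanSpace ℝ (Fin n))) atTop ∧
    ∀ᵐ x : EuclideanSpace ℝ (Fin n) ∂volume,
      (‖x‖ < b 0 → DifferentiableAt ℝ (conjR u) x ∧
        (inner ℝ (gradient (conjR u) x) x : ℝ) - conjR u x = t 0) ∧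
      (∀ k : ℕ, b k < ‖x‖ → ‖x‖ < b (k + 1) → DifferentiableAt ℝ (conjR u) x ∧
        (inner ℝ (gradient (conjR u) x) x : ℝ) - conjR u x = t (k + 1)) := by
  classical
  -- Step 1: v reaches every t k
  have hreach : ∀ k : ℕ, ∃ r, 0 ≤ r ∧ v r = t k := by
    intro k
    induction k with
    | zero => exact ⟨0, le_refl 0, hv0⟩
    | succ k ih =>
      obtain ⟨r0, hr0, hvr0⟩ := ih
      suffices h : ∃ r1, 0 ≤ r1 ∧ t (k+1) ≤ v r1 by
        obtain ⟨r1, hr1, hle⟩ := h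
        have htk : t k < t (k+1) := htm (Nat.lt_succ_self k)
        have hr01 : r0 ≤ r1 := by
          by_contra h'
          push_neg at h'
          have := hvm hr1 hr0 h'
          rw [hvr0] at this
          linarith
        obtain ⟨r, hrI, hrv⟩ := intermediate_value_Icc hr01
          (hvc.mono (Set.Icc_subset_Ici_self.trans (Set.Ici_subset_Ici.2 hr0)))
          (by rw [hvr0]; exact ⟨htk.le, hle⟩)
        exact ⟨r, le_trans hr0 hrI.1, hrv⟩
      by_contra hcon
      push_neg at hcon
      -- every r > r0 has derivative b k
      have hder : ∀ r, r0 < r → HasDerivAt v (b k) r := by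
        intro r hr
        have hrpos : (0:ℝ) < r := lt_of_le_of_lt hr0 hr
        have h1 : t k < v r := by
          rw [← hvr0]; exact hvm hr0 hrpos.le hr
        exact hvd r hrpos k h1 (hcon r hrpos.le)
      set R : ℝ := r0 + 1 + ((t (k+1) - v (r0+1)) / b k + 1) with hR
      have hvlt : v (r0+1) < t (k+1) := hcon (r0+1) (by linarith)
      have hRge : r0 + 1 ≤ R := by
        have : 0 ≤ (t (k+1) - v (r0+1)) / b k := div_nonneg (by linarith) (hbpos k).le
        rw [hR]; linarith
      have haff := affine_of_deriv' hRge
        (hvc.mono (Set.Icc_subset_Ici_self.trans (Set.Ici_subset_Ici.2 (by linarith))))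
        (fun x hx => hder x (by linarith [hx.1]))
      have hbk := hbpos k
      have : b k * (R - (r0+1)) = (t (k+1) - v (r0+1)) + b k := by
        rw [hR]; field_simp; ring
      have hcontra := hcon R (by linarith)
      rw [haff, this] at hcontra
      linarith
  choose ρ hρnn hρv using hreach
  have hρ0 : ρ 0 = 0 := by
    exact hvm.injOn (Set.mem_Ici.2 (hρnn 0)) Set.self_mem_Ici (by rw [hρv, hv0])
  have hρmono : StrictMono ρ := by
    apply strictMono_nat_of_lt_succ
    intro k
    by_contra h'
    push_neg at h'
    rcases eq_or_lt_of_le h' with h | h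
    · have : t (k+1) = t k := by rw [← hρv, ← hρv, h]
      exact absurd this (htm (Nat.lt_succ_self k)).ne'
    · have := hvm (hρnn (k+1)) (hρnn k) h
      rw [hρv, hρv] at this
      exact absurd this (htm (Nat.lt_succ_self k)).asymm
  -- piece formula anchored at the right endpoint
  have hpieceR : ∀ k, ∀ r, ρ k < r → r ≤ ρ (k+1) → v r = t (k+1) + b k * (r - ρ (k+1)) := by
    intro k r h1 h2
    have hd : ∀ x ∈ Set.Ico r (ρ (k+1)), HasDerivAt v (b k) x := by
      intro x hx
      have hx1 : ρ k < x := lt_of_lt_of_le h1 hx.1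
      have hxpos : (0:ℝ) < x := lt_of_le_of_lt (hρnn k) hx1
      refine hvd x hxpos k ?_ ?_
      · rw [← hρv k]; exact hvm (hρnn k) hxpos.le hx1
      · rw [← hρv (k+1)]; exact hvm hxpos.le (hρnn (k+1)) hx.2
    have haff := affine_of_deriv' h2
      (hvc.mono (Set.Icc_subset_Ici_self.trans (Set.Ici_subset_Ici.2
        (le_of_lt (lt_of_le_of_lt (hρnn k) h1)))))
      hd
    rw [hρv] at haff
    linarith
  -- the slope relation
  have hC : ∀ k, t (k+1) = t k + b k * (ρ (k+1) - ρ k) := by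
    intro k
    have hne : ρ k < ρ (k+1) := hρmono (Nat.lt_succ_self k)
    have hNB : (nhdsWithin (ρ k) (Set.Ioc (ρ k) (ρ (k+1)))).NeBot := by
      rw [← mem_closure_iff_nhdsWithin_neBot, closure_Ioc hne.ne]
      exact ⟨le_refl _, hne.le⟩
    have h1 : Tendsto v (nhdsWithin (ρ k) (Set.Ioc (ρ k) (ρ (k+1)))) (nhds (t k)) := by
      have := (hvc (ρ k) (hρnn k)).tendsto
      rw [hρv] at this
      exact this.mono_left (nhdsWithin_mono _ (fun x hx => le_trans (hρnn k) hx.1.le))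
    have h2 : Tendsto (fun r => t (k+1) + b k * (r - ρ (k+1)))
        (nhdsWithin (ρ k) (Set.Ioc (ρ k) (ρ (k+1))))
        (nhds (t (k+1) + b k * (ρ k - ρ (k+1)))) := by
      apply Tendsto.mono_left _ nhdsWithin_le_nhds
      exact (Continuous.tendsto (by continuity) _)
    have h3 : Tendsto v (nhdsWithin (ρ k) (Set.Ioc (ρ k) (ρ (k+1))))
        (nhds (t (k+1) + b k * (ρ k - ρ (k+1)))) := by
      refine h2.congr' ?_
      filter_upwards [self_mem_nhdsWithin] with r hr
      exact (hpieceR k r hr.1 hr.2).symm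
    have := tendsto_nhds_unique h1 h3
    linarith
  have hpiece : ∀ k, ∀ r, ρ k ≤ r → r ≤ ρ (k+1) → v r = t k + b k * (r - ρ k) := by
    intro k r h1 h2
    rcases eq_or_lt_of_le h1 with h | h
    · rw [← h, hρv]; ring
    · rw [hpieceR k r h h2, hC k]; ring
  -- rho tends to infinity
  have hρdiff : ∀ k, ρ (k+1) - ρ k = (t (k+1) - t k) / b k := by
    intro k
    have := hC k
    rw [eq_div_iff (hbpos k).ne']
    linarith
  have hterm : ∀ k : ℕ, 0 ≤ (t (k + 1) - t k) / b (k + 1) :=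
    fun k => div_nonneg (by linarith [htm (Nat.lt_succ_self k)]) (hbpos (k+1)).le
  have hρten : Tendsto ρ atTop atTop := by
    have hns : ¬ Summable (fun k => (t (k + 1) - t k) / b (k + 1)) := by
      intro hs
      rw [← ENNReal.ofReal_tsum_of_nonneg hterm hs] at hsum
      exact ENNReal.ofReal_ne_top hsum
    have hps := (not_summable_iff_tendsto_nat_atTop_of_nonneg hterm).1 hns
    refine tendsto_atTop_mono ?_ hps
    intro N
    have htel : ∑ i ∈ Finset.range N, (ρ (i+1) - ρ i) = ρ N - ρ 0 := Finset.sum_range_sub ρ N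
    have hle : ∑ i ∈ Finset.range N, (t (i + 1) - t i) / b (i + 1)
        ≤ ∑ i ∈ Finset.range N, (ρ (i+1) - ρ i) := by
      refine Finset.sum_le_sum fun i _ => ?_
      rw [hρdiff i]
      exact div_le_div_of_nonneg_left (by linarith [htm (Nat.lt_succ_self i)]) (hbpos i)
        (hbm (Nat.lt_succ_self i)).le
    rw [htel, hρ0] at hle
    linarith
  -- coverage
  have hcover : ∀ r : ℝ, 0 ≤ r → ∃ j, ρ j ≤ r ∧ r < ρ (j+1) := by
    intro r hr
    have hex : ∃ N, r < ρ N := (hρten.eventually_gt_atTop r).exists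
    have hN0 : Nat.find hex ≠ 0 := by
      intro h
      have := Nat.find_spec hex
      rw [h, hρ0] at this
      linarith
    obtain ⟨j, hj⟩ := Nat.exists_eq_succ_of_ne_zero hN0
    refine ⟨j, ?_, ?_⟩
    · by_contra h'
      push_neg at h'
      have : Nat.find hex ≤ j := Nat.find_le h'
      omega
    · rw [show j + 1 = Nat.find hex from by omega]
      exact Nat.find_spec hex
  -- supporting-line key lemma at kink points
  have hkey : ∀ k j, t k + b k * (ρ j - ρ k) ≤ t j := by
    intro k j
    rcases le_or_gt k j with h | h
    · obtain ⟨d, rfl⟩ := Nat.exists_eq_add_of_le h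
      clear h
      induction d with
      | zero => simp
      | succ d ih =>
        have h1 : t (k+d+1) = t (k+d) + b (k+d) * (ρ (k+d+1) - ρ (k+d)) := hC (k+d)
        have h2 : b k ≤ b (k+d) := hbm.monotone (Nat.le_add_right k d)
        have h3 : ρ (k+d) ≤ ρ (k+d+1) := (hρmono (Nat.lt_succ_self _)).le
        have := ih
        rw [show k + (d+1) = (k+d) + 1 by ring]
        nlinarith
    · -- downward: j < k
      have hgen : ∀ d : ℕ, t k + b k * (ρ (k - d) - ρ k) ≤ t (k - d) := by
        intro d
        induction d with
        | zero => simp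
        | succ d ih =>
          rcases Nat.eq_zero_or_pos (k - d) with h0 | h0
          · rw [show k - (d+1) = 0 by omega, ← h0]; exact ih
          · obtain ⟨m, hm⟩ := Nat.exists_eq_succ_of_ne_zero h0.ne'
            have hmd : k - (d+1) = m := by omega
            rw [hmd]
            rw [hm] at ih
            have h1 : t (m+1) = t m + b m * (ρ (m+1) - ρ m) := hC m
            have h2 : b m ≤ b k := by
              refine (hbm.monotone ?_)
              omega
            have h3 : ρ m ≤ ρ (m+1) := (hρmono (Nat.lt_succ_self _)).le
            nlinarith
      have := hgen (k - j)
      rwa [show k - (k - j) = j by omega] at this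
  -- the supporting-line lemma
  have hL : ∀ k r, 0 ≤ r → t k + b k * (r - ρ k) ≤ v r := by
    intro k r hr
    obtain ⟨j, hj1, hj2⟩ := hcover r hr
    have hvr : v r = t j + b j * (r - ρ j) := hpiece j r hj1 hj2.le
    rcases le_or_gt k j with h | h
    · have h1 := hkey k j
      have h2 : b k ≤ b j := hbm.monotone h
      nlinarith [sub_nonneg.2 hj1]
    · have h1 := hkey k (j+1)
      have h2 : b j ≤ b k := (hbm h).le
      have h3 : t (j+1) = t j + b j * (ρ (j+1) - ρ j) := hC j
      nlinarith [sub_nonneg.2 hj2.le]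
  -- upper bounds for the Legendre sup
  have hball : ∀ s r : ℝ, s ≤ b 0 → 0 ≤ r → r * s - v r ≤ -(t 0) := by
    intro s r hs hr
    have h1 := hL 0 r hr
    rw [hρ0] at h1
    nlinarith
  have hann : ∀ (k : ℕ) (s r : ℝ), b k ≤ s → s ≤ b (k+1) → 0 ≤ r →
      r * s - v r ≤ ρ (k+1) * s - t (k+1) := by
    intro k s r h1 h2 hr
    rcases le_total r (ρ (k+1)) with h | h
    · have hl := hL k r hr
      have hc := hC k
      nlinarith
    · have hl := hL (k+1) r hr
      nlinarith
  -- values of conjR u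
  have hb0pos := hbpos 0
  have hconj_ball : ∀ x : EuclideanSpace ℝ (Fin n), ‖x‖ < b 0 → conjR u x = -(t 0) := by
    intro x hx
    have hub : ∀ y : EuclideanSpace ℝ (Fin n), (inner ℝ x y : ℝ) - u y ≤ -(t 0) := by
      intro y
      rw [hu y]
      have h1 : (inner ℝ x y : ℝ) ≤ ‖x‖ * ‖y‖ := real_inner_le_norm x y
      have h2 := hball ‖x‖ ‖y‖ hx.le (norm_nonneg y)
      nlinarith [norm_nonneg y]
    refine le_antisymm (ciSup_le hub) ?_
    have h0 : (inner ℝ x (0 : EuclideanSpace ℝ (Fin n)) : ℝ) - u 0 = -(t 0) := by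
      rw [inner_zero_right, hu 0, norm_zero, hv0]; ring
    calc -(t 0) = (inner ℝ x (0 : EuclideanSpace ℝ (Fin n)) : ℝ) - u 0 := h0.symm
      _ ≤ conjR u x := le_ciSup ⟨-(t 0), Set.forall_mem_range.2 hub⟩ 0
  have hconj_ann : ∀ (k : ℕ) (x : EuclideanSpace ℝ (Fin n)), b k < ‖x‖ → ‖x‖ < b (k+1) →
      conjR u x = ρ (k+1) * ‖x‖ - t (k+1) := by
    intro k x h1 h2
    have hxpos : 0 < ‖x‖ := lt_trans (lt_of_lt_of_le hb0pos ((hbm.monotone (Nat.zero_le k)))) h1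
    have hub : ∀ y : EuclideanSpace ℝ (Fin n), (inner ℝ x y : ℝ) - u y
        ≤ ρ (k+1) * ‖x‖ - t (k+1) := by
      intro y
      rw [hu y]
      have ha : (inner ℝ x y : ℝ) ≤ ‖x‖ * ‖y‖ := real_inner_le_norm x y
      have hb := hann k ‖x‖ ‖y‖ h1.le h2.le (norm_nonneg y)
      nlinarith [norm_nonneg y]
    refine le_antisymm (ciSup_le hub) ?_
    set y₀ : EuclideanSpace ℝ (Fin n) := (ρ (k+1) / ‖x‖) • x with hy₀
    have hny : ‖y₀‖ = ρ (k+1) := by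
      rw [hy₀, norm_smul, Real.norm_eq_abs, abs_div, abs_of_nonneg (hρnn (k+1)),
        abs_of_pos hxpos, div_mul_cancel₀]
      exact hxpos.ne'
    have hinner : (inner ℝ x y₀ : ℝ) = ρ (k+1) * ‖x‖ := by
      rw [hy₀, real_inner_smul_right, real_inner_self_eq_norm_mul_norm]
      field_simp
    have hval : (inner ℝ x y₀ : ℝ) - u y₀ = ρ (k+1) * ‖x‖ - t (k+1) := by
      rw [hinner, hu y₀, hny, hρv]
    calc ρ (k+1) * ‖x‖ - t (k+1) = (inner ℝ x y₀ : ℝ) - u y₀ := hval.symm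
      _ ≤ conjR u x := le_ciSup ⟨ρ (k+1) * ‖x‖ - t (k+1), Set.forall_mem_range.2 hub⟩ y₀
  -- convexity
  have hconv : ConvexOn ℝ Set.univ u := by
    refine ⟨convex_univ, fun x _ y _ p q hp hq hpq => ?_⟩
    rw [hu, hu, hu]
    have h1 : ‖p • x + q • y‖ ≤ p * ‖x‖ + q * ‖y‖ := by
      refine (norm_add_le _ _).trans ?_
      rw [norm_smul, norm_smul, Real.norm_eq_abs, Real.norm_eq_abs,
        abs_of_nonneg hp, abs_of_nonneg hq]
    have hr1 : (0:ℝ) ≤ p * ‖x‖ + q * ‖y‖ := by positivity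
    have h2 : v ‖p • x + q • y‖ ≤ v (p * ‖x‖ + q * ‖y‖) :=
      hvm.monotoneOn (Set.mem_Ici.2 (norm_nonneg _)) (Set.mem_Ici.2 hr1) h1
    refine h2.trans ?_
    obtain ⟨j, hj1, hj2⟩ := hcover (p * ‖x‖ + q * ‖y‖) hr1
    have hvr : v (p * ‖x‖ + q * ‖y‖) = t j + b j * ((p * ‖x‖ + q * ‖y‖) - ρ j) :=
      hpiece j _ hj1 hj2.le
    have hlx := hL j ‖x‖ (norm_nonneg x)
    have hly := hL j ‖y‖ (norm_nonneg y)
    simp only [smul_eq_mul]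
    have e : t j + b j * (p * ‖x‖ + q * ‖y‖ - ρ j)
        = p * (t j + b j * (‖x‖ - ρ j)) + q * (t j + b j * (‖y‖ - ρ j)) := by
      linear_combination (b j * ρ j - t j) * hpq
    rw [hvr, e]
    have := mul_le_mul_of_nonneg_left hlx hp
    have := mul_le_mul_of_nonneg_left hly hq
    linarith
  -- super-coercivity
  have hV : Tendsto (fun r => v r / r) atTop atTop := by
    rw [tendsto_atTop]
    intro C
    obtain ⟨k, hk⟩ := (hbl.eventually_ge_atTop (C + 1)).exists
    filter_upwards [eventually_ge_atTop (max 1 (b k * ρ k - t k))] with r hr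
    have hr1 : (1:ℝ) ≤ r := le_trans (le_max_left _ _) hr
    have hr2 : b k * ρ k - t k ≤ r := le_trans (le_max_right _ _) hr
    have hrpos : (0:ℝ) < r := lt_of_lt_of_le one_pos hr1
    have hl := hL k r (by linarith)
    rw [le_div_iff₀ hrpos]
    nlinarith
  have hsc : Tendsto (fun x : EuclideanSpace ℝ (Fin n) => u x / ‖x‖)
      (cocompact (EuclideanSpace ℝ (Fin n))) atTop := by
    have h1 : Tendsto (fun x : EuclideanSpace ℝ (Fin n) => ‖x‖)
        (cocompact (EuclideanSpace ℝ (Fin n))) atTop := tendsto_norm_cocompact_atTop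
    exact (hV.comp h1).congr fun x => by simp [Function.comp, hu]
  -- inner-product formula for the gradient
  have hgradinner : ∀ (f : EuclideanSpace ℝ (Fin n) → ℝ) (x : EuclideanSpace ℝ (Fin n)),
      (inner ℝ (gradient f x) x : ℝ) = fderiv ℝ f x x := by
    intro f x
    simp only [gradient]
    exact InnerProductSpace.toDual_symm_apply
  -- differentiability on the ball
  have hdiff_ball : ∀ x : EuclideanSpace ℝ (Fin n), ‖x‖ < b 0 →
      DifferentiableAt ℝ (conjR u) x ∧
      (inner ℝ (gradient (conjR u) x) x : ℝ) - conjR u x = t 0 := by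
    intro x hx
    have hop : IsOpen {y : EuclideanSpace ℝ (Fin n) | ‖y‖ < b 0} :=
      isOpen_Iio.preimage continuous_norm
    have heq : conjR u =ᶠ[nhds x] fun _ => -(t 0) :=
      eventually_of_mem (hop.mem_nhds hx) fun y hy => hconj_ball y hy
    have hdiff : DifferentiableAt ℝ (conjR u) x :=
      heq.differentiableAt_iff.mpr (differentiableAt_const _)
    refine ⟨hdiff, ?_⟩
    have hfd : fderiv ℝ (conjR u) x = 0 := by
      rw [heq.fderiv_eq]; exact fderiv_const_apply _
    rw [hgradinner, hfd, hconj_ball x hx]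
    simp
  -- differentiability on the annuli
  have hdiff_ann : ∀ (k : ℕ) (x : EuclideanSpace ℝ (Fin n)), b k < ‖x‖ → ‖x‖ < b (k+1) →
      DifferentiableAt ℝ (conjR u) x ∧
      (inner ℝ (gradient (conjR u) x) x : ℝ) - conjR u x = t (k+1) := by
    intro k x h1 h2
    have hxpos : 0 < ‖x‖ := lt_trans (lt_of_lt_of_le hb0pos (hbm.monotone (Nat.zero_le k))) h1
    have hx0 : x ≠ 0 := norm_pos_iff.1 hxpos
    set c := ρ (k+1) with hcdef
    set g : EuclideanSpace ℝ (Fin n) → ℝ := fun y => c * ‖y‖ - t (k+1) with hg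
    have hgdiff : DifferentiableAt ℝ g x := by
      have hnorm : DifferentiableAt ℝ (fun y : EuclideanSpace ℝ (Fin n) => ‖y‖) x :=
        DifferentiableAt.norm ℝ differentiableAt_id hx0
      exact (hnorm.const_mul c).sub_const _
    have hop : IsOpen {y : EuclideanSpace ℝ (Fin n) | b k < ‖y‖ ∧ ‖y‖ < b (k+1)} := by
      have he : {y : EuclideanSpace ℝ (Fin n) | b k < ‖y‖ ∧ ‖y‖ < b (k+1)}
          = (fun y : EuclideanSpace ℝ (Fin n) => ‖y‖) ⁻¹' (Set.Ioo (b k) (b (k+1))) := rfl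
      rw [he]; exact isOpen_Ioo.preimage continuous_norm
    have heq : conjR u =ᶠ[nhds x] g :=
      eventually_of_mem (hop.mem_nhds ⟨h1, h2⟩) fun y hy => hconj_ann k y hy.1 hy.2
    have hdiff : DifferentiableAt ℝ (conjR u) x := heq.differentiableAt_iff.mpr hgdiff
    refine ⟨hdiff, ?_⟩
    have hφ : HasDerivAt (fun τ : ℝ => x + τ • x) x 0 := by
      simpa using ((hasDerivAt_id (0:ℝ)).smul_const x).const_add x
    have hγ0 : x + (0:ℝ) • x = x := by simp
    have hcomp : HasDerivAt (fun τ : ℝ => g (x + τ • x)) (fderiv ℝ g x x) 0 := by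
      have h' : HasFDerivAt g (fderiv ℝ g x) (x + (0:ℝ) • x) := by
        rw [hγ0]; exact hgdiff.hasFDerivAt
      exact h'.comp_hasDerivAt 0 hφ
    have hmodel : HasDerivAt (fun τ : ℝ => c * ((1 + τ) * ‖x‖) - t (k+1)) (c * ‖x‖) 0 := by
      have hid : HasDerivAt (fun τ : ℝ => 1 + τ) 1 0 := (hasDerivAt_id (0:ℝ)).const_add 1
      have h2' := ((hid.mul_const ‖x‖).const_mul c).sub_const (t (k+1))
      simpa using h2'
    have heqτ : (fun τ : ℝ => c * ((1 + τ) * ‖x‖) - t (k+1)) =ᶠ[nhds (0:ℝ)]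
        (fun τ : ℝ => g (x + τ • x)) := by
      have hmem : Set.Ioo (-1:ℝ) 1 ∈ nhds (0:ℝ) := Ioo_mem_nhds (by norm_num) (by norm_num)
      filter_upwards [hmem] with τ hτ
      have hτpos : (0:ℝ) < 1 + τ := by linarith [hτ.1]
      have hxτ : x + τ • x = (1 + τ) • x := by rw [add_smul, one_smul]
      simp only [hg]
      rw [hxτ, norm_smul, Real.norm_eq_abs, abs_of_pos hτpos]
    have hmodel' : HasDerivAt (fun τ : ℝ => c * ((1 + τ) * ‖x‖) - t (k+1))
        (fderiv ℝ g x x) 0 := hcomp.congr_of_eventuallyEq heqτ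
    have hfgx : fderiv ℝ g x x = c * ‖x‖ := hmodel'.unique hmodel
    have hfd : fderiv ℝ (conjR u) x = fderiv ℝ g x := heq.fderiv_eq
    rw [hgradinner, hfd, hfgx, hconj_ann k x h1 h2]
    ring
  exact ⟨hconv, hsc, ae_of_all _ fun x =>
    ⟨fun hx => hdiff_ball x hx, fun k ha hb' => hdiff_ann k x ha hb'⟩⟩
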